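/- Let X be the n×n cyclic permutation matrix and Y = diag(ε^{n-1}, ε^{n-2}, …, ε, 1) where ε is a primitive n-th root of unity in F. Then ε X Y = Y X, Xⁿ = Yⁿ = I, and the set {X^i Y^j : 0 ≤ i,j ≤ n-1} is a vector-space basis of M_n(F). -/

import Mathlib

/-- For `ε` a primitive `n`-th root of unity, the cyclic permutation matrix `X`
(`X_{i,i+1} = 1` cyclically) and `Y = diag(ε^{n-1}, …, ε, 1)` satisfy `ε X Y = Y X`,
`Xⁿ = Yⁿ = 1`, and `{X^i Y^j : 0 ≤ i,j ≤ n-1}` is a vector-space basis of `M_n(F)`. -/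
theorem epsilon_grading_matrices
    {F : Type*} [Field F] {n : ℕ} [NeZero n] (ε : F) (hε : IsPrimitiveRoot ε n) :
    let X : Matrix (Fin n) (Fin n) F := fun i j => if j = i + 1 then 1 else 0
    let Y : Matrix (Fin n) (Fin n) F := Matrix.diagonal fun i => ε ^ (n - 1 - (i : ℕ))
    ε • (X * Y) = Y * X ∧ X ^ n = 1 ∧ Y ^ n = 1 ∧
      ∃ b : Module.Basis (Fin n × Fin n) F (Matrix (Fin n) (Fin n) F),
        ∀ p : Fin n × Fin n, b p = X ^ (p.1 : ℕ) * Y ^ (p.2 : ℕ) := by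
  intro X Y
  letI : NatCast (Fin n) := (Fin.instAddMonoidWithOne n).toNatCast
  have hn : 0 < n := Nat.pos_of_ne_zero (NeZero.ne n)
  -- powers of X
  have hXpow : ∀ k : ℕ, X ^ k = fun a b => if b = a + (k : Fin n) then (1 : F) else 0 := by
    intro k
    induction k with
    | zero =>
      ext a b
      simp [Matrix.one_apply, eq_comm]
    | succ k ih =>
      ext a b
      rw [pow_succ, ih]
      show (∑ c, (if c = a + (k : Fin n) then (1:F) else 0) * X c b) = _
      simp only [X, ite_mul, one_mul, zero_mul, Finset.sum_ite_eq', Finset.mem_univ, if_true]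
      push_cast
      rw [add_assoc]
  -- powers of Y
  have hYpow : ∀ k : ℕ, Y ^ k =
      Matrix.diagonal fun c : Fin n => ε ^ ((n - 1 - (c : ℕ)) * k) := by
    intro k
    rw [show Y = Matrix.diagonal fun i : Fin n => ε ^ (n - 1 - (i : ℕ)) from rfl,
      Matrix.diagonal_pow]
    ext a b
    rcases eq_or_ne a b with h | h
    · subst h
      rw [Matrix.diagonal_apply_eq, Matrix.diagonal_apply_eq, Pi.pow_apply, pow_mul]
    · rw [Matrix.diagonal_apply_ne _ h, Matrix.diagonal_apply_ne _ h]
  -- entry formula for X^i * Y^j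
  have hentry : ∀ (i j : ℕ) (a b : Fin n), (X ^ i * Y ^ j) a b =
      if b = a + (i : Fin n) then ε ^ ((n - 1 - (b : ℕ)) * j) else 0 := by
    intro i j a b
    rw [hYpow, Matrix.mul_diagonal, hXpow]
    simp [ite_mul]
  refine ⟨?_, ?_, ?_, ?_⟩
  · -- ε • (X * Y) = Y * X
    ext a b
    show ε * (X * Y) a b = (Y * X) a b
    rw [show Y = Matrix.diagonal fun i : Fin n => ε ^ (n - 1 - (i : ℕ)) from rfl,
      Matrix.mul_diagonal, Matrix.diagonal_mul]
    show ε * ((if b = a + 1 then (1:F) else 0) * _) = _ * (if b = a + 1 then (1:F) else 0)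
    by_cases hb : b = a + 1
    · subst hb
      simp only [if_pos rfl, if_true, ite_true, mul_one, one_mul]
      have hval : ((a + 1 : Fin n) : ℕ) = ((a : ℕ) + 1) % n := by
        rw [Fin.val_add, Fin.val_one']
        conv_rhs => rw [Nat.add_mod]
        rw [Nat.mod_eq_of_lt a.isLt]
      rcases Nat.lt_or_ge ((a : ℕ) + 1) n with h | h
      · -- a.val + 1 < n
        rw [hval, Nat.mod_eq_of_lt h, ← pow_succ',
          show (n - 1 - ((a:ℕ) + 1)) + 1 = n - 1 - (a:ℕ) by omega]
      · -- a.val + 1 = n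
        have h' : (a : ℕ) + 1 = n := by have := a.isLt; omega
        rw [hval, h', Nat.mod_self]
        rw [show n - 1 - (a:ℕ) = 0 by omega, pow_zero, Nat.sub_zero]
        rw [← pow_succ', show (n-1)+1 = n by omega, hε.pow_eq_one]
    · simp [hb]
  · -- X ^ n = 1
    rw [hXpow]
    ext a b
    simp [Matrix.one_apply, eq_comm]
  · -- Y ^ n = 1
    rw [hYpow]
    ext a b
    rcases eq_or_ne a b with h | h
    · subst h
      rw [Matrix.diagonal_apply_eq, Matrix.one_apply_eq, mul_comm, pow_mul,
        hε.pow_eq_one, one_pow]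
    · rw [Matrix.diagonal_apply_ne _ h, Matrix.one_apply_ne h]
  · -- basis
    have hli : LinearIndependent F
        (fun p : Fin n × Fin n => X ^ (p.1 : ℕ) * Y ^ (p.2 : ℕ)) := by
      rw [Fintype.linearIndependent_iff]
      intro g hg
      have key : ∀ (i b : Fin n),
          ∑ j : Fin n, g (i, j) * ε ^ ((n - 1 - (b : ℕ)) * (j : ℕ)) = 0 := by
        intro i b
        have h2 := congrFun (congrFun hg (b - i)) b
        simp only [Matrix.sum_apply, Matrix.smul_apply, Matrix.zero_apply,
          smul_eq_mul] at h2
        have h3 : ∑ p : Fin n × Fin n, g p * (X ^ ((p.1 : ℕ)) * Y ^ ((p.2 : ℕ))) (b - i) b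
            = ∑ j : Fin n, g (i, j) * ε ^ ((n - 1 - (b : ℕ)) * (j : ℕ)) := by
          rw [Fintype.sum_prod_type]
          rw [Finset.sum_eq_single i]
          · refine Finset.sum_congr rfl fun j' _ => ?_
            rw [hentry, Fin.cast_val_eq_self, if_pos (by rw [sub_add_cancel])]
          · intro i' _ hne
            apply Finset.sum_eq_zero
            intro j' _
            rw [hentry, Fin.cast_val_eq_self, if_neg, mul_zero]
            intro hb2
            exact hne (add_left_cancel (hb2.symm.trans (sub_add_cancel b i).symm))
          · simp
        rw [← h3]
        exact h2
      intro p
      obtain ⟨i, j⟩ := p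
      set B : Matrix (Fin n) (Fin n) F :=
        Matrix.vandermonde (fun c : Fin n => ε ^ (n - 1 - (c : ℕ))) with hB
      have hdet : B.det ≠ 0 := by
        rw [hB, Matrix.det_vandermonde]
        refine Finset.prod_ne_zero_iff.2 fun a _ => Finset.prod_ne_zero_iff.2 fun b hb => ?_
        rw [Finset.mem_Ioi] at hb
        refine sub_ne_zero_of_ne fun h => ?_
        have h2 := hε.pow_inj (by omega : n - 1 - (b:ℕ) < n) (by omega : n - 1 - (a:ℕ) < n) h
        have hab : (a : ℕ) < (b : ℕ) := hb
        omega
      have hv : B.mulVec (fun j' => g (i, j')) = 0 := by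
        funext b
        show ∑ j' : Fin n, B b j' * g (i, j') = 0
        rw [← key i b]
        refine Finset.sum_congr rfl fun j' _ => ?_
        rw [hB, Matrix.vandermonde_apply, ← pow_mul, mul_comm]
      have hz := Matrix.eq_zero_of_mulVec_eq_zero hdet hv
      exact congrFun hz j
    have hcard : Fintype.card (Fin n × Fin n) =
        Module.finrank F (Matrix (Fin n) (Fin n) F) := by
      simp [Module.finrank_matrix]
    exact ⟨basisOfLinearIndependentOfCardEqFinrank hli hcard,
      fun p => by rw [coe_basisOfLinearIndependentOfCardEqFinrank]⟩
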